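/- Fix a face f of ℤ² and an integer N ≥ 0. Let η₀ and η′₀ be dimer coverings of ℤ², and for k ≥ 1 let η_k = T_k(η_{k−1}) and η′_k = T_k(η′_{k−1}), where T_k is the shuffling map acting at time k−1, with the same choice function used for both evolutions at each step. If the height functions satisfy h_{η₀}(g) = h_{η′₀}(g) for every face g whose label is at ℓ¹-distance at most N+1 from the label of f, then h_{η_k}(f) = h_{η′_k}(f) for every 0 ≤ k ≤ N. -/
import Mathlib


/-- Vertices of the square lattice `ℤ²`. -/
abbrev Vtx := ℤ × ℤ

/-- An edge of `ℤ²`, encoded as its base vertex together with a direction: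
`true` for the horizontal edge to `(+1,0)`, `false` for the vertical edge to `(0,+1)`. -/
abbrev DEdge := Vtx × Bool

/-- The displacement of an edge of given direction. -/
def edir (b : Bool) : Vtx := if b then (1, 0) else (0, 1)

/-- A dimer covering (perfect matching) of `ℤ²`: every vertex belongs to exactly one edge. -/
def IsDimerCover (η : Set DEdge) : Prop :=
  ∀ v : Vtx, ∃! e : DEdge, e ∈ η ∧ (v = e.1 ∨ v = e.1 + edir e.2)

/-- The indicator `1_{e ∈ η}` as a real number. -/
noncomputable def dInd (η : Set DEdge) (e : DEdge) : ℝ :=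
  Set.indicator η (fun _ => (1 : ℝ)) e

/-- `+1` if `m + k` is even, `-1` otherwise: at time `k` a vertex `(x₁,x₂)` is white iff
`x₁ + x₂ + k` is even (the colors of the vertices are interchanged at each time step). -/
def sgnW (k m : ℤ) : ℝ := if (m + k) % 2 = 0 then 1 else -1

/-- Adjacency of faces: the face `g` is one of the four nearest neighbors of `f`. -/
def Adj (f g : ℤ × ℤ) : Prop :=
  g = (f.1 + 1, f.2) ∨ g = (f.1 - 1, f.2) ∨ g = (f.1, f.2 + 1) ∨ g = (f.1, f.2 - 1)

/-- The height increment `σ_e (1_{e∈η} − 1/4)` when stepping from face `f` to an adjacent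
face `g` across their shared edge `e`, with the coloring at time `k`: `σ_e = +1` iff the
endpoint of `e` which is white at time `k` lies to the right of the direction of crossing. -/
noncomputable def inc (k : ℤ) (η : Set DEdge) (f g : ℤ × ℤ) : ℝ :=
  if g = (f.1 + 1, f.2) then
    sgnW k (f.1 + 1 + f.2) * (dInd η ((f.1 + 1, f.2), false) - 1 / 4)
  else if g = (f.1 - 1, f.2) then
    sgnW k (f.1 + f.2 + 1) * (dInd η ((f.1, f.2), false) - 1 / 4)
  else if g = (f.1, f.2 + 1) then
    sgnW k (f.1 + f.2) * (dInd η ((f.1, f.2 + 1), true) - 1 / 4)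
  else if g = (f.1, f.2 - 1) then
    sgnW k (f.1 + f.2) * (dInd η ((f.1, f.2), true) - 1 / 4)
  else 0

/-- `h` is a height function for the dimer covering `η` at time `k`. -/
def IsHeightAt (k : ℤ) (η : Set DEdge) (h : ℤ × ℤ → ℝ) : Prop :=
  ∀ f g : ℤ × ℤ, Adj f g → h g - h f = inc k η f g

/-- Bottom edge of the face `f = (i,j)`. -/
def bE (f : ℤ × ℤ) : DEdge := ((f.1, f.2), true)
/-- Top edge of the face `f`. -/
def tE (f : ℤ × ℤ) : DEdge := ((f.1, f.2 + 1), true)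
/-- Left edge of the face `f`. -/
def lE (f : ℤ × ℤ) : DEdge := ((f.1, f.2), false)
/-- Right edge of the face `f`. -/
def rE (f : ℤ × ℤ) : DEdge := ((f.1 + 1, f.2), false)

/-- The four boundary edges of the face `f`. -/
def bdF (f : ℤ × ℤ) : Set DEdge := {bE f, tE f, lE f, rE f}

/-- The edge opposite to `e` on the boundary of the face `f`. -/
def oppE (f : ℤ × ℤ) (e : DEdge) : DEdge :=
  if e = bE f then tE f else if e = tE f then bE f else if e = lE f then rE f else lE f

/-- The face `f = (i,j)` is even at time `k` iff `i + j ≡ k (mod 2)`. -/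
def IsEvenFace (k : ℤ) (f : ℤ × ℤ) : Prop := (f.1 + f.2) % 2 = k % 2

/-- The shuffling map acting at time `k` with choice function `c` (deletion, sliding and
creation steps). -/
def shuffle (k : ℤ) (c : ℤ × ℤ → Bool) (η : Set DEdge) : Set DEdge :=
  { e | ∃ f : ℤ × ℤ, IsEvenFace k f ∧ e ∈ bdF f ∧
      ((η ∩ bdF f = ∅ ∧
          (if c f then e = tE f ∨ e = bE f else e = lE f ∨ e = rE f)) ∨
        (∃ e₀ : DEdge, η ∩ bdF f = {e₀} ∧ e = oppE f e₀)) }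

lemma sgnW_ne_zero (k m : ℤ) : sgnW k m ≠ 0 := by
  unfold sgnW; split <;> norm_num

lemma dInd_congr {η η' : Set DEdge} {e : DEdge} (h : e ∈ η ↔ e ∈ η') :
    dInd η e = dInd η' e := by
  unfold dInd
  by_cases he : e ∈ η
  · rw [Set.indicator_of_mem he, Set.indicator_of_mem (h.mp he)]
  · rw [Set.indicator_of_notMem he, Set.indicator_of_notMem (fun hc => he (h.mpr hc))]

lemma inc_right (k : ℤ) (η : Set DEdge) (p : ℤ × ℤ) :
    inc k η p (p.1 + 1, p.2) = sgnW k (p.1 + 1 + p.2) * (dInd η (rE p) - 1/4) := by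
  simp [inc, rE]

lemma inc_left (k : ℤ) (η : Set DEdge) (p : ℤ × ℤ) :
    inc k η p (p.1 - 1, p.2) = sgnW k (p.1 + p.2 + 1) * (dInd η (lE p) - 1/4) := by
  have h1 : ((p.1 - 1 : ℤ), p.2) ≠ (p.1 + 1, p.2) := by
    simp only [ne_eq, Prod.mk.injEq, not_and]; omega
  simp [inc, lE, h1]

lemma inc_up (k : ℤ) (η : Set DEdge) (p : ℤ × ℤ) :
    inc k η p (p.1, p.2 + 1) = sgnW k (p.1 + p.2) * (dInd η (tE p) - 1/4) := by
  have h1 : ((p.1 : ℤ), p.2 + 1) ≠ (p.1 + 1, p.2) := by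
    simp only [ne_eq, Prod.mk.injEq, not_and]; omega
  have h2 : ((p.1 : ℤ), p.2 + 1) ≠ (p.1 - 1, p.2) := by
    simp only [ne_eq, Prod.mk.injEq, not_and]; omega
  simp [inc, tE, h1, h2]

lemma inc_down (k : ℤ) (η : Set DEdge) (p : ℤ × ℤ) :
    inc k η p (p.1, p.2 - 1) = sgnW k (p.1 + p.2) * (dInd η (bE p) - 1/4) := by
  have h1 : ((p.1 : ℤ), p.2 - 1) ≠ (p.1 + 1, p.2) := by
    simp only [ne_eq, Prod.mk.injEq, not_and]; omega
  have h2 : ((p.1 : ℤ), p.2 - 1) ≠ (p.1 - 1, p.2) := by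
    simp only [ne_eq, Prod.mk.injEq, not_and]; omega
  have h3 : ((p.1 : ℤ), p.2 - 1) ≠ (p.1, p.2 + 1) := by
    simp only [ne_eq, Prod.mk.injEq, not_and]; omega
  simp [inc, bE, h1, h2, h3]

/-- If the height functions of two coverings agree on a face and its four neighbors,
the coverings agree on the boundary of that face. -/
lemma inter_bdF_eq {k : ℤ} {η η' : Set DEdge} {h h' : ℤ × ℤ → ℝ}
    (hh : IsHeightAt k η h) (hh' : IsHeightAt k η' h') (p : ℤ × ℤ)
    (e0 : h p = h' p)
    (e1 : h (p.1 + 1, p.2) = h' (p.1 + 1, p.2))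
    (e2 : h (p.1 - 1, p.2) = h' (p.1 - 1, p.2))
    (e3 : h (p.1, p.2 + 1) = h' (p.1, p.2 + 1))
    (e4 : h (p.1, p.2 - 1) = h' (p.1, p.2 - 1)) :
    η ∩ bdF p = η' ∩ bdF p := by
  have key : ∀ q : ℤ × ℤ, Adj p q → h q = h' q → inc k η p q = inc k η' p q := by
    intro q hq hq'
    rw [← hh p q hq, ← hh' p q hq, e0, hq']
  have extract : ∀ (s : ℤ) (e : DEdge),
      sgnW k s * (dInd η e - 1/4) = sgnW k s * (dInd η' e - 1/4) →
      (e ∈ η ↔ e ∈ η') := by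
    intro s e he
    have h2 := mul_left_cancel₀ (sgnW_ne_zero k s) he
    have hd : dInd η e = dInd η' e := by linarith
    unfold dInd Set.indicator at hd
    by_cases h1 : e ∈ η <;> by_cases h2 : e ∈ η' <;> simp_all
  have hR := key (p.1 + 1, p.2) (Or.inl rfl) e1
  rw [inc_right, inc_right] at hR
  have mR := extract _ _ hR
  have hL := key (p.1 - 1, p.2) (Or.inr (Or.inl rfl)) e2
  rw [inc_left, inc_left] at hL
  have mL := extract _ _ hL
  have hT := key (p.1, p.2 + 1) (Or.inr (Or.inr (Or.inl rfl))) e3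
  rw [inc_up, inc_up] at hT
  have mT := extract _ _ hT
  have hB := key (p.1, p.2 - 1) (Or.inr (Or.inr (Or.inr rfl))) e4
  rw [inc_down, inc_down] at hB
  have mB := extract _ _ hB
  ext e
  simp only [Set.mem_inter_iff, bdF, Set.mem_insert_iff, Set.mem_singleton_iff]
  constructor
  · rintro ⟨hm, (rfl|rfl|rfl|rfl)⟩
    · exact ⟨mB.mp hm, Or.inl rfl⟩
    · exact ⟨mT.mp hm, Or.inr (Or.inl rfl)⟩
    · exact ⟨mL.mp hm, Or.inr (Or.inr (Or.inl rfl))⟩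
    · exact ⟨mR.mp hm, Or.inr (Or.inr (Or.inr rfl))⟩
  · rintro ⟨hm, (rfl|rfl|rfl|rfl)⟩
    · exact ⟨mB.mpr hm, Or.inl rfl⟩
    · exact ⟨mT.mpr hm, Or.inr (Or.inl rfl)⟩
    · exact ⟨mL.mpr hm, Or.inr (Or.inr (Or.inl rfl))⟩
    · exact ⟨mR.mpr hm, Or.inr (Or.inr (Or.inr rfl))⟩

/-- An edge lies on the boundary of exactly one even face. -/
lemma bdF_even_unique {k : ℤ} {e : DEdge} {p q : ℤ × ℤ}
    (hp : e ∈ bdF p) (hq : e ∈ bdF q)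
    (hpe : IsEvenFace k p) (hqe : IsEvenFace k q) : p = q := by
  simp only [bdF, Set.mem_insert_iff, Set.mem_singleton_iff, bE, tE, lE, rE] at hp hq
  unfold IsEvenFace at hpe hqe
  obtain ⟨i, j⟩ := p; obtain ⟨a, b⟩ := q; obtain ⟨⟨x, y⟩, d⟩ := e
  simp only [Prod.mk.injEq] at hp hq hpe hqe ⊢
  rcases hp with ⟨⟨h1, h2⟩, h3⟩ | ⟨⟨h1, h2⟩, h3⟩ | ⟨⟨h1, h2⟩, h3⟩ | ⟨⟨h1, h2⟩, h3⟩ <;>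
    rcases hq with ⟨⟨g1, g2⟩, g3⟩ | ⟨⟨g1, g2⟩, g3⟩ | ⟨⟨g1, g2⟩, g3⟩ | ⟨⟨g1, g2⟩, g3⟩ <;>
    simp_all <;> omega

/-- Membership of a boundary edge of an even face in the shuffled configuration depends
only on the intersection of the configuration with that face's boundary. -/
lemma mem_shuffle_iff {k : ℤ} {c : ℤ × ℤ → Bool} {η η' : Set DEdge} {p : ℤ × ℤ}
    {e : DEdge} (hp : IsEvenFace k p) (he : e ∈ bdF p)
    (hint : η ∩ bdF p = η' ∩ bdF p) :
    e ∈ shuffle k c η ↔ e ∈ shuffle k c η' := by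
  have main : ∀ (η₁ η₂ : Set DEdge), η₁ ∩ bdF p = η₂ ∩ bdF p →
      e ∈ shuffle k c η₁ → e ∈ shuffle k c η₂ := by
    intro η₁ η₂ hi hm
    simp only [shuffle, Set.mem_setOf_eq] at hm ⊢
    obtain ⟨q, hqe, heq, hcond⟩ := hm
    have hpq : q = p := bdF_even_unique heq he hqe hp
    subst hpq
    refine ⟨q, hqe, heq, ?_⟩
    rwa [hi] at hcond
  exact ⟨main η η' hint, main η' η hint.symm⟩

/-- locality of the dynamics: run the shuffling dynamics from two initial
dimer coverings with the same choice functions, normalizing the heights so that at each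
step the height is unchanged at every face odd at the acting time.  If the two initial
height functions agree at all faces at `ℓ¹`-distance at most `N + 1` from `f`, then the
heights at `f` agree up to time `N`. -/
theorem stmt_15 (f : ℤ × ℤ) (N : ℕ) (c : ℕ → ℤ × ℤ → Bool)
    (η η' : ℕ → Set DEdge)
    (hη0 : IsDimerCover (η 0)) (hη'0 : IsDimerCover (η' 0))
    (hev : ∀ k : ℕ, η (k + 1) = shuffle (k : ℤ) (c k) (η k))
    (hev' : ∀ k : ℕ, η' (k + 1) = shuffle (k : ℤ) (c k) (η' k))
    (h h' : ℕ → ℤ × ℤ → ℝ)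
    (hh : ∀ k : ℕ, IsHeightAt (k : ℤ) (η k) (h k))
    (hh' : ∀ k : ℕ, IsHeightAt (k : ℤ) (η' k) (h' k))
    (hnorm : ∀ (k : ℕ) (g : ℤ × ℤ), ¬ IsEvenFace (k : ℤ) g → h (k + 1) g = h k g)
    (hnorm' : ∀ (k : ℕ) (g : ℤ × ℤ), ¬ IsEvenFace (k : ℤ) g → h' (k + 1) g = h' k g)
    (hinit : ∀ g : ℤ × ℤ, |g.1 - f.1| + |g.2 - f.2| ≤ (N : ℤ) + 1 → h 0 g = h' 0 g) :
    ∀ k : ℕ, k ≤ N → h k f = h' k f := by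
  have key : ∀ k : ℕ, k ≤ N + 1 →
      ∀ g : ℤ × ℤ, |g.1 - f.1| + |g.2 - f.2| ≤ (N : ℤ) + 1 - k → h k g = h' k g := by
    intro k
    induction k with
    | zero =>
      intro _ g hg
      push_cast at hg
      exact hinit g (by linarith)
    | succ k ih =>
      intro hk g hg
      push_cast at hg
      have ihg := ih (by omega)
      have hball : ∀ g' : ℤ × ℤ, |g'.1 - g.1| + |g'.2 - g.2| ≤ 1 →
          h k g' = h' k g' := by
        intro g' hg'
        refine ihg g' ?_
        push_cast
        have t1 : |g'.1 - f.1| ≤ |g'.1 - g.1| + |g.1 - f.1| := abs_sub_le _ _ _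
        have t2 : |g'.2 - f.2| ≤ |g'.2 - g.2| + |g.2 - f.2| := abs_sub_le _ _ _
        linarith
      by_cases hge : IsEvenFace (k : ℤ) g
      · have hqodd : ¬ IsEvenFace (k : ℤ) (g.1 + 1, g.2) := by
          unfold IsEvenFace at hge ⊢
          show ¬ (g.1 + 1 + g.2) % 2 = (k : ℤ) % 2
          omega
        have e0 := hball g (by norm_num)
        have e1 := hball (g.1 + 1, g.2)
          (by rw [show g.1 + 1 - g.1 = 1 by ring, show g.2 - g.2 = 0 by ring]; norm_num)
        have e2 := hball (g.1 - 1, g.2)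
          (by rw [show g.1 - 1 - g.1 = -1 by ring, show g.2 - g.2 = 0 by ring]; norm_num)
        have e3 := hball (g.1, g.2 + 1)
          (by rw [show g.1 - g.1 = 0 by ring, show g.2 + 1 - g.2 = 1 by ring]; norm_num)
        have e4 := hball (g.1, g.2 - 1)
          (by rw [show g.1 - g.1 = 0 by ring, show g.2 - 1 - g.2 = -1 by ring]; norm_num)
        have hsame := inter_bdF_eq (hh k) (hh' k) g e0 e1 e2 e3 e4
        have hmem : rE g ∈ η (k + 1) ↔ rE g ∈ η' (k + 1) := by
          rw [hev k, hev' k]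
          exact mem_shuffle_iff hge
            (by simp only [bdF, Set.mem_insert_iff, Set.mem_singleton_iff]; tauto) hsame
        have hd : dInd (η (k + 1)) (rE g) = dInd (η' (k + 1)) (rE g) := dInd_congr hmem
        have s1 := hh (k + 1) g (g.1 + 1, g.2) (Or.inl rfl)
        have s2 := hh' (k + 1) g (g.1 + 1, g.2) (Or.inl rfl)
        rw [inc_right] at s1 s2
        have hq : h (k + 1) (g.1 + 1, g.2) = h' (k + 1) (g.1 + 1, g.2) := by
          rw [hnorm k _ hqodd, hnorm' k _ hqodd]; exact e1
        rw [hd] at s1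
        linarith
      · rw [hnorm k g hge, hnorm' k g hge]
        refine ihg g ?_
        push_cast
        linarith
  intro k hkN
  refine key k (by omega) f ?_
  rw [sub_self, sub_self, abs_zero]
  omega
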